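/- arXiv:1202.3949 — 3 statements merged into one kernel-verified Lean document; each statement's English description precedes it below -/
import Mathlib

section
/- Let k be a positive integer and a an integer. If a ≡ 1 (mod rad(k)), then a^(k / rad(k)) ≡ 1 (mod k). -/
/-- The radical of a positive integer: the product of its distinct prime factors. -/
def rad (k : ℕ) : ℕ := ∏ p ∈ k.primeFactors, p

lemma rad_dvd (k : ℕ) : rad k ∣ k := Nat.prod_primeFactors_dvd k

lemma lemA (n p : ℕ) (b : ℤ) (hpn : p ∣ n) (hb : (n : ℤ) ∣ b - 1) :
    ((p * n : ℕ) : ℤ) ∣ b ^ p - 1 := by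
  rw [← geom_sum_mul]
  have h1 : (n : ℤ) ∣ (∑ i ∈ Finset.range p, b ^ i) - p := by
    have he : (∑ i ∈ Finset.range p, b ^ i) - p = ∑ i ∈ Finset.range p, (b ^ i - 1) := by
      rw [Finset.sum_sub_distrib]; simp
    rw [he]
    exact Finset.dvd_sum fun i _ =>
      dvd_trans hb (by simpa using sub_dvd_pow_sub_pow b 1 i)
  obtain ⟨c, hc⟩ := hb
  obtain ⟨s, hs⟩ := h1
  obtain ⟨t, ht⟩ := hpn
  have hgs : (∑ i ∈ Finset.range p, b ^ i) = (p : ℤ) + n * s := by linarith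
  rw [hgs, hc, ht]
  exact ⟨c + c * s * t, by push_cast; ring⟩

lemma aux : ∀ k : ℕ, 0 < k → ∀ a : ℤ, ((rad k : ℤ) ∣ a - 1) →
    (k : ℤ) ∣ a ^ (k / rad k) - 1 := by
  intro k
  induction k using Nat.strong_induction_on with
  | _ k ih =>
    intro hk a h
    set r := rad k with hr
    have hrdvd : r ∣ k := rad_dvd k
    have hr0 : 0 < r := Nat.pos_of_dvd_of_pos hrdvd hk
    set m := k / r with hm
    have hkrm : k = r * m := (Nat.mul_div_cancel' hrdvd).symm
    by_cases hm1 : m = 1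
    · rw [hm1, pow_one]
      have : k = r := by rw [hkrm, hm1, mul_one]
      rw [this]; exact h
    · have hm0 : 0 < m := Nat.pos_of_ne_zero (by rintro h0; rw [h0, mul_zero] at hkrm; omega)
      set p := m.minFac with hp
      have hpp : p.Prime := Nat.minFac_prime hm1
      have hpm : p ∣ m := Nat.minFac_dvd m
      have hmk : m ∣ k := Nat.div_dvd_of_dvd hrdvd
      have hpk : p ∣ k := hpm.trans hmk
      have hpr : p ∣ r := Finset.dvd_prod_of_mem _ (Nat.mem_primeFactors.mpr ⟨hpp, hpk, by omega⟩)
      set k' := k / p with hk'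
      have hk'eq : k' = r * (m / p) := by
        rw [hk', hkrm, Nat.mul_div_assoc r hpm]
      have hpk' : p ∣ k' := by
        rw [hk'eq]; exact hpr.mul_right _
      have hk'0 : 0 < k' := Nat.div_pos (Nat.le_of_dvd hk hpk) hpp.pos
      have hkk' : k = p * k' := (Nat.mul_div_cancel' hpk).symm
      have hk'lt : k' < k := by
        have h2 : 2 ≤ p := hpp.two_le
        calc k' < p * k' := by nlinarith
        _ = k := hkk'.symm
      -- rad k' = r
      have hpf : k'.primeFactors = k.primeFactors := by
        rw [hkk', Nat.primeFactors_mul hpp.ne_zero hk'0.ne']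
        have : p.primeFactors = {p} := Nat.Prime.primeFactors hpp
        rw [this]
        symm
        apply Finset.union_eq_right.mpr
        intro q hq
        simp only [Finset.mem_singleton] at hq
        subst hq
        exact Nat.mem_primeFactors.mpr ⟨hpp, hpk', by omega⟩
      have hradk' : rad k' = r := by
        rw [hr, rad, rad, hpf]
      have hdiv : k' / rad k' = m / p := by
        rw [hradk', hk'eq, Nat.mul_div_cancel_left _ hr0]
      have hIH := ih k' hk'lt hk'0 a (by rw [hradk']; exact h)
      rw [hdiv] at hIH
      have := lemA k' p (a ^ (m / p)) hpk' hIH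
      rw [← pow_mul, Nat.div_mul_cancel hpm] at this
      rw [← hkk'] at this
      exact this

/-- If a ≡ 1 (mod rad(k)), then a^(k / rad(k)) ≡ 1 (mod k). -/
theorem pow_div_radical_congr_one (k : ℕ) (hk : 0 < k) (a : ℤ)
    (h : a ≡ 1 [ZMOD (rad k : ℤ)]) : a ^ (k / rad k) ≡ 1 [ZMOD (k : ℤ)] := by
  have h' : (rad k : ℤ) ∣ a - 1 := by
    have := Int.ModEq.dvd h.symm
    simpa using this
  have := aux k hk a h'
  exact (Int.modEq_iff_dvd.mpr (by simpa using this)).symm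
end

section
/- Let k ≥ 2 be an integer and let a₁, …, a_M be integers. (i) If a_m ≡ 1 (mod rad(k)) for every m, then the product a₁^(k/rad(k)) · a₂^(k/rad(k)) ⋯ a_M^(k/rad(k)) is congruent to 1 modulo k. (ii) If a_m ≡ 0 (mod rad(k)) for at least one index m, then this product is congruent to 0 modulo k. -/
/-- Key lifting lemma: if every prime of `m` divides `d` and `d ∣ a - 1`,
then `d * m ∣ a ^ m - 1`. -/
lemma aux_lift : ∀ (m : ℕ) (d : ℕ) (a : ℤ), (∀ p ∈ m.primeFactors, p ∣ d) →
    (d : ℤ) ∣ a - 1 → ((d * m : ℕ) : ℤ) ∣ a ^ m - 1 := by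
  intro m
  induction m using Nat.strong_induction_on with
  | _ m IH =>
    intro d a hm hd
    rcases Nat.eq_zero_or_pos m with rfl | hm0
    · simp
    rcases eq_or_ne m 1 with rfl | hm1
    · simpa using hd
    -- m ≥ 2: take the least prime factor p
    have hp : (m.minFac).Prime := Nat.minFac_prime hm1
    set p := m.minFac with hpdef
    have hpdvd : p ∣ m := Nat.minFac_dvd m
    obtain ⟨m', hm'⟩ := hpdvd
    have hm'pos : 0 < m' := by
      rcases Nat.eq_zero_or_pos m' with rfl | h
      · omega
      · exact h
    have hm'lt : m' < m := by
      have : 1 < p := hp.one_lt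
      have h2 : 1 * m' < p * m' := by
        exact Nat.mul_lt_mul_of_lt_of_le this (le_refl m') hm'pos
      omega
    have hm'dvd : m' ∣ m := ⟨p, by rw [hm', mul_comm]⟩
    have hsub : m'.primeFactors ⊆ m.primeFactors :=
      Nat.primeFactors_mono hm'dvd (by omega)
    have IH' : ((d * m' : ℕ) : ℤ) ∣ a ^ m' - 1 :=
      IH m' hm'lt d a (fun q hq => hm q (hsub hq)) hd
    set x : ℤ := a ^ m' with hx
    have hpd : p ∣ d := hm p (Nat.mem_primeFactors.mpr ⟨hp, Nat.minFac_dvd m, by omega⟩)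
    have hpx : (p : ℤ) ∣ x - 1 := by
      have h1 : (p : ℤ) ∣ a - 1 := dvd_trans (Int.natCast_dvd_natCast.mpr hpd) hd
      have h2 : a - 1 ∣ x - 1 := by
        have := sub_dvd_pow_sub_pow a 1 m'
        simpa [hx] using this
      exact dvd_trans h1 h2
    -- p divides the geometric sum
    have hsum : (p : ℤ) ∣ ∑ i ∈ Finset.range p, x ^ i := by
      have h1 : (∑ i ∈ Finset.range p, x ^ i) - (p : ℤ) =
          ∑ i ∈ Finset.range p, (x ^ i - 1) := by
        rw [Finset.sum_sub_distrib, Finset.sum_const, Finset.card_range]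
        simp
      have h2 : (p : ℤ) ∣ ∑ i ∈ Finset.range p, (x ^ i - 1) := by
        apply Finset.dvd_sum
        intro i _
        have : x - 1 ∣ x ^ i - 1 := by
          have := sub_dvd_pow_sub_pow x 1 i
          simpa using this
        exact dvd_trans hpx this
      have := dvd_sub h2 (dvd_refl (p : ℤ))
      have h3 : (p : ℤ) ∣ (∑ i ∈ Finset.range p, x ^ i) - (p : ℤ) := h1 ▸ h2
      have := dvd_add h3 (dvd_refl (p : ℤ))
      simpa using this
    have hfact : a ^ m - 1 = (∑ i ∈ Finset.range p, x ^ i) * (x - 1) := by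
      rw [geom_sum_mul, hx, ← pow_mul, mul_comm m' p, ← hm']
    have : ((p : ℤ) * ((d * m' : ℕ) : ℤ)) ∣ a ^ m - 1 := by
      rw [hfact]
      exact mul_dvd_mul hsum IH'
    have heq : ((d * m : ℕ) : ℤ) = (p : ℤ) * ((d * m' : ℕ) : ℤ) := by
      push_cast
      rw [hm']
      push_cast
      ring
    rw [heq]
    exact this

/-- `(rad k).factorization p = 1` for `p` a prime factor of `k`. -/
lemma rad_factorization (k : ℕ) (hk : k ≠ 0) (p : ℕ) (hp : p ∈ k.primeFactors) :
    (rad k).factorization p = 1 := by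
  unfold rad
  rw [Nat.factorization_prod (fun q hq => (Nat.prime_of_mem_primeFactors hq).ne_zero)]
  rw [Finset.sum_apply']
  have : ∀ q ∈ k.primeFactors, (q.factorization) p = if q = p then 1 else 0 := by
    intro q hq
    rw [(Nat.prime_of_mem_primeFactors hq).factorization, Finsupp.single_apply]
  rw [Finset.sum_congr rfl this, Finset.sum_ite_eq' k.primeFactors p (fun _ => 1)]
  simp [hp]

lemma rad_pos (k : ℕ) (hk : k ≠ 0) : 0 < rad k :=
  Nat.pos_of_dvd_of_pos (rad_dvd k) (Nat.pos_of_ne_zero hk)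

/-- `k ∣ rad k ^ (k / rad k)` for `k ≥ 2`. -/
lemma dvd_rad_pow (k : ℕ) (hk : 2 ≤ k) : k ∣ (rad k) ^ (k / rad k) := by
  have hk0 : k ≠ 0 := by omega
  have hradpos := rad_pos k hk0
  have hn : 0 < k / rad k := Nat.div_pos (Nat.le_of_dvd (by omega) (rad_dvd k)) hradpos
  set n := k / rad k with hn'
  rw [← Nat.factorization_le_iff_dvd hk0 (pow_ne_zero n (by omega))]
  intro p
  rcases Classical.em (p ∈ k.primeFactors) with hp | hp
  · have hpp := Nat.prime_of_mem_primeFactors hp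
    rw [Nat.factorization_pow]
    simp only [Finsupp.smul_apply, smul_eq_mul]
    rw [rad_factorization k hk0 p hp, mul_one]
    set e := k.factorization p with he
    -- p^(e-1) divides n
    have h1 : (n).factorization p = e - 1 := by
      rw [hn', Nat.factorization_div (rad_dvd k)]
      simp [rad_factorization k hk0 p hp, he]
    have h2 : p ^ (e - 1) ∣ n := by
      have := Nat.ordProj_dvd n p
      rw [h1] at this
      exact this
    have h3 : p ^ (e - 1) ≤ n := Nat.le_of_dvd hn h2
    have h4 : 2 ^ (e - 1) ≤ p ^ (e - 1) := Nat.pow_le_pow_left hpp.two_le _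
    have h5 : e ≤ 2 ^ (e - 1) := by
      have := Nat.lt_two_pow_self (n := e - 1)
      omega
    omega
  · have : k.factorization p = 0 := by
      rw [← Nat.support_factorization] at hp
      exact Finsupp.notMem_support_iff.mp hp
    simp [this]

/-- Let k ≥ 2 and a₁, …, a_M be integers.
(i) If every a_m ≡ 1 (mod rad(k)), then ∏ m, a_m^(k/rad(k)) ≡ 1 (mod k).
(ii) If some a_m ≡ 0 (mod rad(k)), then ∏ m, a_m^(k/rad(k)) ≡ 0 (mod k). -/
theorem prod_pow_div_radical_congr (k : ℕ) (hk : 2 ≤ k) (M : ℕ) (a : Fin M → ℤ) :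
    ((∀ m, a m ≡ 1 [ZMOD (rad k : ℤ)]) →
      (∏ m, a m ^ (k / rad k)) ≡ 1 [ZMOD (k : ℤ)]) ∧
    ((∃ m, a m ≡ 0 [ZMOD (rad k : ℤ)]) →
      (∏ m, a m ^ (k / rad k)) ≡ 0 [ZMOD (k : ℤ)]) := by
  have hk0 : k ≠ 0 := by omega
  have hradpos := rad_pos k hk0
  have hkeq : rad k * (k / rad k) = k := Nat.mul_div_cancel' (rad_dvd k)
  set n := k / rad k with hn'
  have hndvd : n ∣ k := Nat.div_dvd_of_dvd (rad_dvd k)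
  constructor
  · intro h
    -- each factor ≡ 1 mod k
    have key : ∀ m, (k : ℤ) ∣ a m ^ n - 1 := by
      intro m
      have hprimes : ∀ p ∈ n.primeFactors, p ∣ rad k := by
        intro p hp
        have hp' : p ∈ k.primeFactors := Nat.primeFactors_mono hndvd hk0 hp
        exact Finset.dvd_prod_of_mem _ hp'
      have hd : ((rad k : ℕ) : ℤ) ∣ a m - 1 := (h m).symm.dvd
      have := aux_lift n (rad k) (a m) hprimes hd
      rwa [hkeq] at this
    rw [← ZMod.intCast_eq_intCast_iff]
    push_cast
    apply Finset.prod_eq_one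
    intro m _
    have : ((a m ^ n : ℤ) : ZMod k) = ((1 : ℤ) : ZMod k) :=
      (ZMod.intCast_eq_intCast_iff _ _ _).mpr (Int.modEq_iff_dvd.mpr (key m)).symm
    push_cast at this
    exact this
  · intro ⟨m, hm⟩
    rw [Int.modEq_zero_iff_dvd]
    have h1 : ((rad k : ℕ) : ℤ) ∣ a m := Int.modEq_zero_iff_dvd.mp hm
    have h2 : (k : ℤ) ∣ a m ^ n := by
      calc (k : ℤ) ∣ ((rad k : ℕ) : ℤ) ^ n := by
            exact_mod_cast Int.natCast_dvd_natCast.mpr (dvd_rad_pow k hk)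
        _ ∣ a m ^ n := pow_dvd_pow_of_dvd h1 n
    exact dvd_trans h2 (Finset.dvd_prod_of_mem (fun m => a m ^ n) (Finset.mem_univ m))
end

section
/- Let p be a prime, t ≥ 1 an integer, B an n × n integer matrix, and V₁, …, V_N integer vectors of length n such that p^t divides every entry of B V_j for each j, and such that V₁, …, V_N span the nullspace of B modulo p^t. Let B̄ be the n × (N+n) integer matrix whose j-th column (for 1 ≤ j ≤ N) is B V_j / p^t (entrywise exact division) and whose last n columns form the matrix B; let V̄ be the n × (N+n) integer matrix whose j-th column (for 1 ≤ j ≤ N) is V_j and whose last n columns form p^t times the n × n identity matrix. Suppose the integer vectors z₁, …, z_M of length N+n span the nullspace of B̄ modulo p. Then every integer vector w of length n with B w ≡ 0 (mod p^{t+1}) is congruent modulo p^{t+1} (entrywise) to an integer linear combination of the vectors V̄ z₁, …, V̄ z_M, p V₁, …, p V_N. -/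
/-- Integer vectors V₁, …, V_N span the nullspace of B modulo m: every integer vector
w with B w ≡ 0 (mod m) entrywise is congruent mod m (entrywise) to an integer linear
combination of the V_j. -/
def SpansNullspaceMod {r c N : ℕ} (B : Matrix (Fin r) (Fin c) ℤ)
    (m : ℤ) (V : Fin N → Fin c → ℤ) : Prop :=
  ∀ w : Fin c → ℤ, (∀ i, m ∣ B.mulVec w i) →
    ∃ u : Fin N → ℤ, ∀ i, m ∣ (w - ∑ j, u j • V j) i

/-- If V₁, …, V_N span the nullspace of B mod p^t, and z₁, …, z_M span
the nullspace of B̄ = [ B V₁/p^t ⋯ B V_N/p^t | B ] mod p, then every w with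
B w ≡ 0 (mod p^{t+1}) is congruent mod p^{t+1} to an integer linear combination of
V̄ z₁, …, V̄ z_M, p V₁, …, p V_N, where V̄ = [ V₁ ⋯ V_N | p^t I ]. -/
theorem nullspace_lifting (p : ℕ) (hp : p.Prime) (t : ℕ) (ht : 1 ≤ t)
    (n N M : ℕ) (B : Matrix (Fin n) (Fin n) ℤ) (V : Fin N → Fin n → ℤ)
    (hVdvd : ∀ j i, (p : ℤ) ^ t ∣ B.mulVec (V j) i)
    (hVspan : SpansNullspaceMod B ((p : ℤ) ^ t) V)
    (Bbar : Matrix (Fin n) (Fin (N + n)) ℤ)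
    (hBbar : Bbar = Matrix.of fun i j =>
      Fin.addCases (fun j₁ => B.mulVec (V j₁) i / (p : ℤ) ^ t) (fun j₂ => B i j₂) j)
    (Vbar : Matrix (Fin n) (Fin (N + n)) ℤ)
    (hVbar : Vbar = Matrix.of fun i j =>
      Fin.addCases (fun j₁ => V j₁ i) (fun j₂ => if i = j₂ then (p : ℤ) ^ t else 0) j)
    (z : Fin M → Fin (N + n) → ℤ)
    (hzspan : SpansNullspaceMod Bbar (p : ℤ) z) :
    ∀ w : Fin n → ℤ, (∀ i, (p : ℤ) ^ (t + 1) ∣ B.mulVec w i) →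
      ∃ (c : Fin M → ℤ) (d : Fin N → ℤ),
        ∀ i, (p : ℤ) ^ (t + 1) ∣
          (w - ((∑ h, c h • Vbar.mulVec (z h)) + ∑ j, d j • ((p : ℤ) • V j))) i := by
  intro w hw
  have hp0 : (0:ℤ) < (p:ℤ) := by exact_mod_cast hp.pos
  have hw' : ∀ i, (p:ℤ)^t ∣ B.mulVec w i := fun i =>
    dvd_trans (pow_dvd_pow _ (Nat.le_succ t)) (hw i)
  obtain ⟨u, hu⟩ := hVspan w hw'
  set y : Fin n → ℤ := fun i => (w - ∑ j, u j • V j) i / (p:ℤ)^t with hydef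
  have hy : ∀ i, w i = (∑ j, u j * V j i) + (p:ℤ)^t * y i := by
    intro i
    have h := Int.mul_ediv_cancel' (hu i)
    simp only [Pi.sub_apply, Finset.sum_apply, Pi.smul_apply, smul_eq_mul] at h
    simp only [hydef, Pi.sub_apply, Finset.sum_apply, Pi.smul_apply, smul_eq_mul]
    linarith
  set ubar : Fin (N+n) → ℤ := Fin.addCases u y with hubar
  -- pointwise formula for Vbar.mulVec
  have hVm : ∀ (v : Fin (N+n) → ℤ) i, Vbar.mulVec v i =
      (∑ j, V j i * v (Fin.castAdd n j)) + (p:ℤ)^t * v (Fin.natAdd N i) := by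
    intro v i
    simp [hVbar, Matrix.mulVec, dotProduct, Fin.sum_univ_add, ite_mul,
      Finset.sum_ite_eq]
  have hBm : ∀ (v : Fin (N+n) → ℤ) i, Bbar.mulVec v i =
      (∑ j, (B.mulVec (V j) i / (p:ℤ)^t) * v (Fin.castAdd n j))
        + ∑ k, B i k * v (Fin.natAdd N k) := by
    intro v i
    simp [hBbar, Matrix.mulVec, dotProduct, Fin.sum_univ_add]
  -- p^t * (Bbar ubar) = B w
  have hkey1 : ∀ i, (p:ℤ)^t * Bbar.mulVec ubar i = B.mulVec w i := by
    intro i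
    rw [hBm]
    have e1 : ∀ j : Fin N, (p:ℤ)^t * ((B.mulVec (V j) i / (p:ℤ)^t) * u j)
        = B.mulVec (V j) i * u j := fun j => by
      rw [← mul_assoc, Int.mul_ediv_cancel' (hVdvd j i)]
    have hBwi : B.mulVec w i =
        (∑ j, B.mulVec (V j) i * u j) + (p:ℤ)^t * ∑ k, B i k * y k := by
      simp only [Matrix.mulVec, dotProduct]
      calc (∑ k, B i k * w k)
          = ∑ k, ((∑ j, B i k * (u j * V j k)) + (p:ℤ)^t * (B i k * y k)) := by
            refine Finset.sum_congr rfl fun k _ => ?_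
            rw [hy k, mul_add, Finset.mul_sum]
            congr 1
            ring
        _ = (∑ k, ∑ j, B i k * (u j * V j k)) + ∑ k, (p:ℤ)^t * (B i k * y k) := by
            rw [Finset.sum_add_distrib]
        _ = (∑ j, (∑ k, B i k * V j k) * u j) + (p:ℤ)^t * ∑ k, B i k * y k := by
            rw [Finset.sum_comm, ← Finset.mul_sum]
            congr 1
            · refine Finset.sum_congr rfl fun j _ => ?_
              rw [Finset.sum_mul]
              refine Finset.sum_congr rfl fun k _ => ?_
              ring
    rw [hBwi]
    rw [mul_add, Finset.mul_sum]
    congr 1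
    · refine Finset.sum_congr rfl fun j _ => ?_
      have : ubar (Fin.castAdd n j) = u j := by simp [hubar]
      rw [this]
      exact e1 j
    · simp [hubar]
  have hkey : ∀ i, (p:ℤ) ∣ Bbar.mulVec ubar i := by
    intro i
    have h := hw i
    rw [← hkey1 i, pow_succ] at h
    exact (mul_dvd_mul_iff_left (pow_ne_zero t (ne_of_gt hp0))).mp h
  obtain ⟨cvec, hc⟩ := hzspan ubar hkey
  set s : Fin (N+n) → ℤ := fun j => (ubar - ∑ h, cvec h • z h) j / (p:ℤ) with hsdef
  have hs : ∀ j, ubar j = (∑ h, cvec h * z h j) + (p:ℤ) * s j := by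
    intro j
    have h := Int.mul_ediv_cancel' (hc j)
    simp only [Pi.sub_apply, Finset.sum_apply, Pi.smul_apply, smul_eq_mul] at h
    simp only [hsdef, Pi.sub_apply, Finset.sum_apply, Pi.smul_apply, smul_eq_mul]
    linarith
  have hubar_eq : ubar = (∑ h, cvec h • z h) + (p:ℤ) • s := by
    funext j
    simp only [Pi.add_apply, Finset.sum_apply, Pi.smul_apply, smul_eq_mul]
    exact hs j
  refine ⟨cvec, fun j => s (Fin.castAdd n j), fun i => ?_⟩
  have hwV : w i = Vbar.mulVec ubar i := by
    rw [hVm]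
    have h1 : ∀ j : Fin N, ubar (Fin.castAdd n j) = u j := fun j => by simp [hubar]
    have h2 : ubar (Fin.natAdd N i) = y i := by simp [hubar]
    simp only [h1, h2]
    rw [hy i]
    congr 1
    exact Finset.sum_congr rfl fun j _ => mul_comm _ _
  have hlin : Vbar.mulVec ubar
      = (∑ h, cvec h • Vbar.mulVec (z h)) + (p:ℤ) • Vbar.mulVec s := by
    rw [hubar_eq]
    simp only [← Matrix.mulVecLin_apply, map_add, map_sum, map_smul]
  have hfin : w i - ((∑ h, cvec h * Vbar.mulVec (z h) i)
      + ∑ j, s (Fin.castAdd n j) * ((p:ℤ) * V j i))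
      = (p:ℤ)^(t+1) * s (Fin.natAdd N i) := by
    have h3 := congrFun hlin i
    simp only [Pi.add_apply, Finset.sum_apply, Pi.smul_apply, smul_eq_mul] at h3
    have h4 := hVm s i
    have h5 : (p:ℤ) * ∑ j, V j i * s (Fin.castAdd n j)
        = ∑ j, s (Fin.castAdd n j) * ((p:ℤ) * V j i) := by
      rw [Finset.mul_sum]; exact Finset.sum_congr rfl fun j _ => by ring
    rw [hwV, h3, h4, mul_add, h5]
    ring
  simp only [Pi.sub_apply, Pi.add_apply, Finset.sum_apply, Pi.smul_apply, smul_eq_mul]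
  rw [hfin]
  exact dvd_mul_right _ _
end
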